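/- For nonnegative integers l ≤ n and 0 ≤ s ≤ n-l, define B_{l,n}^r = C(l+r, r)·C(n-r, n-l-r) − C(l+r-1, r-1)·C(n-r-1, n-l-r-1) for 0 ≤ r ≤ n-l. Then ∑_{r=0}^{s} C(n, r) · B_{l, n-2r}^{s-r} = C(n, l) · C(n-l, s). -/

import Mathlib

/-- Binomial coefficient `C(n,r)` for integer arguments: zero if `r < 0` or
`0 ≤ n < r`, the usual binomial for `0 ≤ r ≤ n`, and the generalized binomial
for negative upper index. -/
def C (n r : ℤ) : ℤ :=
  if r < 0 then 0
  else if 0 ≤ n then (n.toNat.choose r.toNat : ℤ)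
  else (-1) ^ r.toNat * ((r - n - 1).toNat.choose r.toNat : ℤ)

def B (l n r : ℤ) : ℤ :=
  C (l + r) r * C (n - r) (n - l - r) - C (l + r - 1) (r - 1) * C (n - r - 1) (n - l - r - 1)

lemma C_neg {n r : ℤ} (h : r < 0) : C n r = 0 := by simp [C, h]

lemma C_eq {n r : ℤ} (hr : 0 ≤ r) (hn : 0 ≤ n) :
    C n r = (n.toNat.choose r.toNat : ℤ) := by simp [C, not_lt.2 hr, hn]

lemma C_cast (a b : ℕ) : C a b = (a.choose b : ℤ) := by
  rw [C_eq (by positivity) (by positivity)]; simp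

lemma C_zero_of_lt {n r : ℤ} (hn : 0 ≤ n) (h : n < r) : C n r = 0 := by
  rw [C_eq (le_trans hn h.le) hn, Nat.choose_eq_zero_of_lt (by omega)]
  simp

lemma C_pascal {m : ℤ} (r : ℤ) (hm : 0 ≤ m) : C (m+1) r = C m r + C m (r-1) := by
  rcases lt_or_ge r 0 with hr | hr
  · rw [C_neg hr, C_neg hr, C_neg (by omega)]; ring
  obtain ⟨a, rfl⟩ : ∃ a : ℕ, m = a := ⟨m.toNat, (Int.toNat_of_nonneg hm).symm⟩
  rcases eq_or_lt_of_le hr with h0 | h0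
  · rw [← h0, C_neg (show (0:ℤ)-1 < 0 by norm_num),
        C_eq le_rfl (by positivity), C_eq le_rfl (by positivity)]
    simp
  obtain ⟨b, rfl⟩ : ∃ b : ℕ, r = (b:ℤ) + 1 := ⟨(r-1).toNat, by omega⟩
  rw [show ((b:ℤ)+1-1) = ((b:ℕ):ℤ) by push_cast; ring,
      show ((a:ℤ)+1) = ((a+1:ℕ):ℤ) by push_cast; ring,
      show ((b:ℤ)+1) = ((b+1:ℕ):ℤ) by push_cast; ring,
      C_cast, C_cast, C_cast, Nat.choose_succ_succ]
  push_cast; ring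

def KS (l u v : ℕ) : ℤ :=
  ∑ r ∈ Finset.range (min u v + 1),
    (C (l + u + v : ℕ) r - C (l + u + v : ℕ) ((r : ℤ) - 1)) *
      (C ((l : ℤ) + u - r) ((u : ℤ) - r) * C ((l : ℤ) + v - r) ((v : ℤ) - r))

lemma sum_shift (N : ℕ) (f : ℕ → ℤ) (hf : f 0 = 0) :
    ∑ r ∈ Finset.range (N+1), f (r+1)
      = (∑ r ∈ Finset.range (N+1), f r) + f (N+1) := by
  rw [Finset.sum_range_succ (fun r => f (r+1)), Finset.sum_range_succ' f, hf]
  ring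

lemma KS_ext (l u v N : ℕ) (h : min u v + 1 ≤ N) :
    KS l u v = ∑ r ∈ Finset.range N,
      (C (l + u + v : ℕ) r - C (l + u + v : ℕ) ((r : ℤ) - 1)) *
        (C ((l : ℤ) + u - r) ((u : ℤ) - r) * C ((l : ℤ) + v - r) ((v : ℤ) - r)) := by
  refine Finset.sum_subset (Finset.range_subset_range.2 h) ?_
  intro r hr hr'
  simp only [Finset.mem_range] at hr hr'
  rcases Nat.lt_or_ge u r with hu | hu
  · rw [C_neg (show (u:ℤ) - r < 0 by push_cast; omega)]; ring
  · rw [C_neg (show (v:ℤ) - r < 0 by push_cast; omega)]; ring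

lemma KS_symm (l u v : ℕ) : KS l u v = KS l v u := by
  unfold KS
  rw [min_comm, show l + v + u = l + u + v by ring]
  exact Finset.sum_congr rfl fun r _ => by ring

lemma C_diag {x : ℤ} (hx : 0 ≤ x) : C x x = 1 := by
  rw [C_eq hx hx, Nat.choose_self]; norm_num

lemma C_zero {x : ℤ} (hx : 0 ≤ x) : C x 0 = 1 := by
  rw [C_eq le_rfl hx]; simp

lemma KS_u0 (l v : ℕ) : KS l 0 v = ((l+v).choose v : ℤ) := by
  unfold KS
  rw [show min 0 v = 0 from by omega, Finset.sum_range_one]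
  simp only [Nat.cast_zero, Nat.add_zero, Nat.zero_add, sub_zero, add_zero, zero_add]
  rw [C_neg (show (0:ℤ) - 1 < 0 by norm_num), C_zero (by positivity),
      C_zero (by positivity),
      show ((l:ℤ) + v) = ((l+v:ℕ):ℤ) by push_cast; ring,
      show ((v:ℤ)) = ((v:ℕ):ℤ) from rfl, C_cast]
  simp

lemma KS_l0 (u v : ℕ) : KS 0 u v = ((u+v).choose (min u v) : ℤ) := by
  unfold KS
  simp only [Nat.cast_zero, Nat.zero_add, zero_add]
  have h1 : ∀ r ∈ Finset.range (min u v + 1),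
      (C (u + v : ℕ) r - C (u + v : ℕ) ((r : ℤ) - 1)) *
        (C ((u : ℤ) - r) ((u : ℤ) - r) * C ((v : ℤ) - r) ((v : ℤ) - r))
      = (fun r : ℕ => C (u + v : ℕ) ((r:ℤ) - 1)) (r+1)
        - (fun r : ℕ => C (u + v : ℕ) ((r:ℤ) - 1)) r := by
    intro r hr
    simp only [Finset.mem_range] at hr
    rw [C_diag (show (0:ℤ) ≤ (u:ℤ) - r by push_cast; omega),
        C_diag (show (0:ℤ) ≤ (v:ℤ) - r by push_cast; omega)]
    dsimp only
    rw [show ((r+1:ℕ):ℤ) - 1 = (r:ℤ) by push_cast; ring]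
    ring
  rw [Finset.sum_congr rfl h1, Finset.sum_range_sub (fun r : ℕ => C (u + v : ℕ) ((r:ℤ) - 1))]
  rw [C_neg (show ((0:ℕ):ℤ) - 1 < 0 by norm_num),
      show ((min u v + 1 : ℕ):ℤ) - 1 = ((min u v : ℕ):ℤ) by push_cast; ring, C_cast]
  simp

lemma KS_rec (l u v : ℕ) :
    KS (l+1) (u+1) (v+1)
      = KS l (u+1) (v+1) + KS (l+1) u (v+1) + KS (l+1) (u+1) v := by
  have h1 : KS (l+1) (u+1) (v+1)
      = ∑ r ∈ Finset.range (min u v + 2), (C ((l:ℤ)+(u:ℤ)+(v:ℤ)+3) (r:ℤ) - C ((l:ℤ)+(u:ℤ)+(v:ℤ)+3) ((r:ℤ)-1)) * (C ((l:ℤ)+(u:ℤ)+2-(r:ℤ)) ((u:ℤ)+1-(r:ℤ)) * C ((l:ℤ)+(v:ℤ)+2-(r:ℤ)) ((v:ℤ)+1-(r:ℤ))) := by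
    unfold KS
    rw [show min (u+1) (v+1) + 1 = min u v + 2 by omega]
    refine Finset.sum_congr rfl fun r _ => ?_
    push_cast
    ring_nf
  have h2 : ∑ r ∈ Finset.range (min u v + 2), (C ((l:ℤ)+(u:ℤ)+(v:ℤ)+3) (r:ℤ) - C ((l:ℤ)+(u:ℤ)+(v:ℤ)+3) ((r:ℤ)-1)) * (C ((l:ℤ)+(u:ℤ)+2-(r:ℤ)) ((u:ℤ)+1-(r:ℤ)) * C ((l:ℤ)+(v:ℤ)+2-(r:ℤ)) ((v:ℤ)+1-(r:ℤ)))
      = ∑ r ∈ Finset.range (min u v + 2), ((C ((l:ℤ)+(u:ℤ)+(v:ℤ)+2) (r:ℤ) - C ((l:ℤ)+(u:ℤ)+(v:ℤ)+2) ((r:ℤ)-1)) + (C ((l:ℤ)+(u:ℤ)+(v:ℤ)+2) ((r:ℤ)-1) - C ((l:ℤ)+(u:ℤ)+(v:ℤ)+2) ((r:ℤ)-2))) * (C ((l:ℤ)+(u:ℤ)+2-(r:ℤ)) ((u:ℤ)+1-(r:ℤ)) * C ((l:ℤ)+(v:ℤ)+2-(r:ℤ)) ((v:ℤ)+1-(r:ℤ)))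 := by
    refine Finset.sum_congr rfl fun r _ => ?_
    rw [show (l:ℤ)+(u:ℤ)+(v:ℤ)+3 = ((l:ℤ)+(u:ℤ)+(v:ℤ)+2)+1 by ring,
        C_pascal ((r:ℤ)) (by positivity), C_pascal ((r:ℤ)-1) (by positivity)]
    ring_nf
  have h4 : ∑ r ∈ Finset.range (min u v + 2), (C ((l:ℤ)+(u:ℤ)+(v:ℤ)+2) ((r:ℤ)-1) - C ((l:ℤ)+(u:ℤ)+(v:ℤ)+2) ((r:ℤ)-2)) * (C ((l:ℤ)+(u:ℤ)+2-(r:ℤ)) ((u:ℤ)+1-(r:ℤ)) * C ((l:ℤ)+(v:ℤ)+2-(r:ℤ)) ((v:ℤ)+1-(r:ℤ)))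
      = ∑ r ∈ Finset.range (min u v + 2), (C ((l:ℤ)+(u:ℤ)+(v:ℤ)+2) (r:ℤ) - C ((l:ℤ)+(u:ℤ)+(v:ℤ)+2) ((r:ℤ)-1)) * (C ((l:ℤ)+(u:ℤ)+1-(r:ℤ)) ((u:ℤ)-(r:ℤ)) * C ((l:ℤ)+(v:ℤ)+1-(r:ℤ)) ((v:ℤ)-(r:ℤ))) := by
    have hs := sum_shift (min u v + 1)
      (fun r : ℕ => (C ((l:ℤ)+(u:ℤ)+(v:ℤ)+2) ((r:ℤ)-1) - C ((l:ℤ)+(u:ℤ)+(v:ℤ)+2) ((r:ℤ)-2)) * (C ((l:ℤ)+(u:ℤ)+2-(r:ℤ)) ((u:ℤ)+1-(r:ℤ)) * C ((l:ℤ)+(v:ℤ)+2-(r:ℤ)) ((v:ℤ)+1-(r:ℤ))))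
      (by push_cast; rw [C_neg (by norm_num), C_neg (by norm_num)]; ring)
    have htop : (fun r : ℕ => (C ((l:ℤ)+(u:ℤ)+(v:ℤ)+2) ((r:ℤ)-1) - C ((l:ℤ)+(u:ℤ)+(v:ℤ)+2) ((r:ℤ)-2)) * (C ((l:ℤ)+(u:ℤ)+2-(r:ℤ)) ((u:ℤ)+1-(r:ℤ)) * C ((l:ℤ)+(v:ℤ)+2-(r:ℤ)) ((v:ℤ)+1-(r:ℤ)))) (min u v + 1 + 1) = 0 := by
      dsimp only
      rcases le_total u v with h | h
      · rw [min_eq_left h]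
        rw [C_neg (show (u:ℤ) + 1 - ((u+1+1:ℕ):ℤ) < 0 by push_cast; omega)]
        ring
      · rw [min_eq_right h]
        rw [C_neg (show (v:ℤ) + 1 - ((v+1+1:ℕ):ℤ) < 0 by push_cast; omega)]
        ring
    have h5 : ∑ r ∈ Finset.range (min u v + 2),
        (fun r : ℕ => (C ((l:ℤ)+(u:ℤ)+(v:ℤ)+2) ((r:ℤ)-1) - C ((l:ℤ)+(u:ℤ)+(v:ℤ)+2) ((r:ℤ)-2)) * (C ((l:ℤ)+(u:ℤ)+2-(r:ℤ)) ((u:ℤ)+1-(r:ℤ)) * C ((l:ℤ)+(v:ℤ)+2-(r:ℤ)) ((v:ℤ)+1-(r:ℤ)))) (r+1)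
        = ∑ r ∈ Finset.range (min u v + 2), (C ((l:ℤ)+(u:ℤ)+(v:ℤ)+2) (r:ℤ) - C ((l:ℤ)+(u:ℤ)+(v:ℤ)+2) ((r:ℤ)-1)) * (C ((l:ℤ)+(u:ℤ)+1-(r:ℤ)) ((u:ℤ)-(r:ℤ)) * C ((l:ℤ)+(v:ℤ)+1-(r:ℤ)) ((v:ℤ)-(r:ℤ))) := by
      refine Finset.sum_congr rfl fun r _ => ?_
      dsimp only
      push_cast
      ring_nf
    beta_reduce at htop
    rw [← h5, hs, htop, add_zero]
  have h6 : ∑ r ∈ Finset.range (min u v + 2), (C ((l:ℤ)+(u:ℤ)+(v:ℤ)+2) (r:ℤ) - C ((l:ℤ)+(u:ℤ)+(v:ℤ)+2) ((r:ℤ)-1)) * (C ((l:ℤ)+(u:ℤ)+2-(r:ℤ)) ((u:ℤ)+1-(r:ℤ)) * C ((l:ℤ)+(v:ℤ)+2-(r:ℤ)) ((v:ℤ)+1-(r:ℤ)))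
          + ∑ r ∈ Finset.range (min u v + 2), (C ((l:ℤ)+(u:ℤ)+(v:ℤ)+2) (r:ℤ) - C ((l:ℤ)+(u:ℤ)+(v:ℤ)+2) ((r:ℤ)-1)) * (C ((l:ℤ)+(u:ℤ)+1-(r:ℤ)) ((u:ℤ)-(r:ℤ)) * C ((l:ℤ)+(v:ℤ)+1-(r:ℤ)) ((v:ℤ)-(r:ℤ)))
      = ∑ r ∈ Finset.range (min u v + 2), (C ((l:ℤ)+(u:ℤ)+(v:ℤ)+2) (r:ℤ) - C ((l:ℤ)+(u:ℤ)+(v:ℤ)+2) ((r:ℤ)-1)) * (C ((l:ℤ)+(u:ℤ)+1-(r:ℤ)) ((u:ℤ)+1-(r:ℤ)) * C ((l:ℤ)+(v:ℤ)+1-(r:ℤ)) ((v:ℤ)+1-(r:ℤ)))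
      + ∑ r ∈ Finset.range (min u v + 2), (C ((l:ℤ)+(u:ℤ)+(v:ℤ)+2) (r:ℤ) - C ((l:ℤ)+(u:ℤ)+(v:ℤ)+2) ((r:ℤ)-1)) * (C ((l:ℤ)+(u:ℤ)+1-(r:ℤ)) ((u:ℤ)-(r:ℤ)) * C ((l:ℤ)+(v:ℤ)+2-(r:ℤ)) ((v:ℤ)+1-(r:ℤ)))
      + ∑ r ∈ Finset.range (min u v + 2), (C ((l:ℤ)+(u:ℤ)+(v:ℤ)+2) (r:ℤ) - C ((l:ℤ)+(u:ℤ)+(v:ℤ)+2) ((r:ℤ)-1)) * (C ((l:ℤ)+(u:ℤ)+2-(r:ℤ)) ((u:ℤ)+1-(r:ℤ)) * C ((l:ℤ)+(v:ℤ)+1-(r:ℤ)) ((v:ℤ)-(r:ℤ))) := by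
    rw [← Finset.sum_add_distrib, ← Finset.sum_add_distrib, ← Finset.sum_add_distrib]
    refine Finset.sum_congr rfl fun r hr => ?_
    simp only [Finset.mem_range] at hr
    have hru : (r:ℤ) ≤ (u:ℤ) + 1 := by
      have : r ≤ min u v + 1 := by omega
      omega
    have hrv : (r:ℤ) ≤ (v:ℤ) + 1 := by
      have : r ≤ min u v + 1 := by omega
      omega
    have pA : C ((l:ℤ)+(u:ℤ)+2-(r:ℤ)) ((u:ℤ)+1-(r:ℤ)) = C ((l:ℤ)+(u:ℤ)+1-(r:ℤ)) ((u:ℤ)+1-(r:ℤ)) + C ((l:ℤ)+(u:ℤ)+1-(r:ℤ)) ((u:ℤ)-(r:ℤ)) := by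
      rw [show (l:ℤ)+(u:ℤ)+2-(r:ℤ) = ((l:ℤ)+(u:ℤ)+1-(r:ℤ))+1 by ring,
          C_pascal ((u:ℤ)+1-(r:ℤ)) (by omega)]
      ring_nf
    have pB : C ((l:ℤ)+(v:ℤ)+2-(r:ℤ)) ((v:ℤ)+1-(r:ℤ)) = C ((l:ℤ)+(v:ℤ)+1-(r:ℤ)) ((v:ℤ)+1-(r:ℤ)) + C ((l:ℤ)+(v:ℤ)+1-(r:ℤ)) ((v:ℤ)-(r:ℤ)) := by
      rw [show (l:ℤ)+(v:ℤ)+2-(r:ℤ) = ((l:ℤ)+(v:ℤ)+1-(r:ℤ))+1 by ring,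
          C_pascal ((v:ℤ)+1-(r:ℤ)) (by omega)]
      ring_nf
    rw [pA, pB]
    ring
  have h7 : KS l (u+1) (v+1) = ∑ r ∈ Finset.range (min u v + 2), (C ((l:ℤ)+(u:ℤ)+(v:ℤ)+2) (r:ℤ) - C ((l:ℤ)+(u:ℤ)+(v:ℤ)+2) ((r:ℤ)-1)) * (C ((l:ℤ)+(u:ℤ)+1-(r:ℤ)) ((u:ℤ)+1-(r:ℤ)) * C ((l:ℤ)+(v:ℤ)+1-(r:ℤ)) ((v:ℤ)+1-(r:ℤ))) := by
    rw [KS_ext l (u+1) (v+1) (min u v + 2) (by omega)]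
    refine Finset.sum_congr rfl fun r _ => ?_
    push_cast
    ring_nf
  have h8 : KS (l+1) u (v+1) = ∑ r ∈ Finset.range (min u v + 2), (C ((l:ℤ)+(u:ℤ)+(v:ℤ)+2) (r:ℤ) - C ((l:ℤ)+(u:ℤ)+(v:ℤ)+2) ((r:ℤ)-1)) * (C ((l:ℤ)+(u:ℤ)+1-(r:ℤ)) ((u:ℤ)-(r:ℤ)) * C ((l:ℤ)+(v:ℤ)+2-(r:ℤ)) ((v:ℤ)+1-(r:ℤ))) := by
    rw [KS_ext (l+1) u (v+1) (min u v + 2) (by omega)]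
    refine Finset.sum_congr rfl fun r _ => ?_
    push_cast
    ring_nf
  have h9 : KS (l+1) (u+1) v = ∑ r ∈ Finset.range (min u v + 2), (C ((l:ℤ)+(u:ℤ)+(v:ℤ)+2) (r:ℤ) - C ((l:ℤ)+(u:ℤ)+(v:ℤ)+2) ((r:ℤ)-1)) * (C ((l:ℤ)+(u:ℤ)+2-(r:ℤ)) ((u:ℤ)+1-(r:ℤ)) * C ((l:ℤ)+(v:ℤ)+1-(r:ℤ)) ((v:ℤ)-(r:ℤ))) := by
    rw [KS_ext (l+1) (u+1) v (min u v + 2) (by omega)]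
    refine Finset.sum_congr rfl fun r _ => ?_
    push_cast
    ring_nf
  calc KS (l+1) (u+1) (v+1)
      = ∑ r ∈ Finset.range (min u v + 2), ((C ((l:ℤ)+(u:ℤ)+(v:ℤ)+2) (r:ℤ) - C ((l:ℤ)+(u:ℤ)+(v:ℤ)+2) ((r:ℤ)-1)) + (C ((l:ℤ)+(u:ℤ)+(v:ℤ)+2) ((r:ℤ)-1) - C ((l:ℤ)+(u:ℤ)+(v:ℤ)+2) ((r:ℤ)-2))) * (C ((l:ℤ)+(u:ℤ)+2-(r:ℤ)) ((u:ℤ)+1-(r:ℤ)) * C ((l:ℤ)+(v:ℤ)+2-(r:ℤ)) ((v:ℤ)+1-(r:ℤ))) := by rw [h1, h2]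
    _ = ∑ r ∈ Finset.range (min u v + 2), (C ((l:ℤ)+(u:ℤ)+(v:ℤ)+2) (r:ℤ) - C ((l:ℤ)+(u:ℤ)+(v:ℤ)+2) ((r:ℤ)-1)) * (C ((l:ℤ)+(u:ℤ)+2-(r:ℤ)) ((u:ℤ)+1-(r:ℤ)) * C ((l:ℤ)+(v:ℤ)+2-(r:ℤ)) ((v:ℤ)+1-(r:ℤ)))
        + ∑ r ∈ Finset.range (min u v + 2), (C ((l:ℤ)+(u:ℤ)+(v:ℤ)+2) ((r:ℤ)-1) - C ((l:ℤ)+(u:ℤ)+(v:ℤ)+2) ((r:ℤ)-2)) * (C ((l:ℤ)+(u:ℤ)+2-(r:ℤ)) ((u:ℤ)+1-(r:ℤ)) * C ((l:ℤ)+(v:ℤ)+2-(r:ℤ)) ((v:ℤ)+1-(r:ℤ))) := by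
        rw [← Finset.sum_add_distrib]
        exact Finset.sum_congr rfl fun r _ => by ring
    _ = ∑ r ∈ Finset.range (min u v + 2), (C ((l:ℤ)+(u:ℤ)+(v:ℤ)+2) (r:ℤ) - C ((l:ℤ)+(u:ℤ)+(v:ℤ)+2) ((r:ℤ)-1)) * (C ((l:ℤ)+(u:ℤ)+2-(r:ℤ)) ((u:ℤ)+1-(r:ℤ)) * C ((l:ℤ)+(v:ℤ)+2-(r:ℤ)) ((v:ℤ)+1-(r:ℤ)))
        + ∑ r ∈ Finset.range (min u v + 2), (C ((l:ℤ)+(u:ℤ)+(v:ℤ)+2) (r:ℤ) - C ((l:ℤ)+(u:ℤ)+(v:ℤ)+2) ((r:ℤ)-1)) * (C ((l:ℤ)+(u:ℤ)+1-(r:ℤ)) ((u:ℤ)-(r:ℤ)) * C ((l:ℤ)+(v:ℤ)+1-(r:ℤ)) ((v:ℤ)-(r:ℤ))) := by rw [h4]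
    _ = KS l (u+1) (v+1) + KS (l+1) u (v+1) + KS (l+1) (u+1) v := by
        rw [h6, h7, h8, h9]

lemma key (l u v : ℕ) : KS l u v = ((l+u+v).choose l : ℤ) * ((u+v).choose u : ℤ) := by
  suffices H : ∀ N l u v, l + u + v = N →
      KS l u v = ((l+u+v).choose l : ℤ) * ((u+v).choose u : ℤ) from H _ l u v rfl
  intro N
  induction N using Nat.strong_induction_on with
  | _ N ih =>
    intro l u v hN
    rcases u with _ | u
    · rw [KS_u0]
      simp only [Nat.add_zero, Nat.zero_add, Nat.choose_zero_right]
      rw [Nat.choose_symm_add]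
      push_cast; ring
    · rcases v with _ | v
      · rw [KS_symm, KS_u0]
        simp only [Nat.add_zero, Nat.zero_add, Nat.choose_self]
        rw [Nat.choose_symm_add]
        push_cast; ring
      · rcases l with _ | l
        · rw [KS_l0]
          simp only [Nat.zero_add, Nat.choose_zero_right]
          rcases le_total (u+1) (v+1) with h | h
          · rw [min_eq_left h]; push_cast; ring
          · rw [min_eq_right h, Nat.choose_symm_add]
            push_cast; ring
        · rw [KS_rec,
              ih (l+(u+1)+(v+1)) (by omega) l (u+1) (v+1) rfl,
              ih ((l+1)+u+(v+1)) (by omega) (l+1) u (v+1) rfl,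
              ih ((l+1)+(u+1)+v) (by omega) (l+1) (u+1) v rfl]
          rw [show l+(u+1)+(v+1) = l+u+v+2 by omega,
              show (l+1)+u+(v+1) = l+u+v+2 by omega,
              show (l+1)+(u+1)+v = l+u+v+2 by omega,
              show (l+1)+(u+1)+(v+1) = l+u+v+2+1 by omega,
              show (u+1)+(v+1) = (u+v+1)+1 by omega,
              show u+(v+1) = u+v+1 by omega,
              show (u+1)+v = u+v+1 by omega,
              Nat.choose_succ_succ (l+u+v+2) l,
              Nat.choose_succ_succ (u+v+1) u]
          push_cast; ring

theorem stmt_4 (l n s : ℕ) (hl : l ≤ n) (hs : s ≤ n - l) :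
    ∑ r ∈ Finset.range (s + 1), C n r * B l ((n : ℤ) - 2 * r) ((s : ℤ) - r)
      = C n l * C ((n : ℤ) - l) s := by
  obtain ⟨a, ha⟩ : ∃ a, l + s + a = n := ⟨n - l - s, by omega⟩
  have hnZ : (n:ℤ) = (l:ℤ) + s + a := by omega
  have hB : ∀ r : ℕ, B l ((n:ℤ) - 2*r) ((s:ℤ) - r)
      = (C ((l:ℤ)+s-r) ((s:ℤ)-r) * C ((l:ℤ)+a-r) ((a:ℤ)-r))
        - (C ((l:ℤ)+s-((r:ℤ)+1)) ((s:ℤ)-((r:ℤ)+1)) * C ((l:ℤ)+a-((r:ℤ)+1)) ((a:ℤ)-((r:ℤ)+1))) := by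
    intro r
    rw [hnZ]
    simp only [B]
    ring_nf
  have h1 : ∑ r ∈ Finset.range (s + 1), C n r * B l ((n : ℤ) - 2 * r) ((s : ℤ) - r)
      = ∑ r ∈ Finset.range (s + 1),
          (C n r * (C ((l:ℤ)+s-r) ((s:ℤ)-r) * C ((l:ℤ)+a-r) ((a:ℤ)-r))
           - C n r * (C ((l:ℤ)+s-((r:ℤ)+1)) ((s:ℤ)-((r:ℤ)+1)) * C ((l:ℤ)+a-((r:ℤ)+1)) ((a:ℤ)-((r:ℤ)+1)))) := by
    refine Finset.sum_congr rfl fun r _ => ?_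
    rw [hB r]; ring
  have h2 : ∑ r ∈ Finset.range (s + 1),
        C n r * (C ((l:ℤ)+s-((r:ℤ)+1)) ((s:ℤ)-((r:ℤ)+1)) * C ((l:ℤ)+a-((r:ℤ)+1)) ((a:ℤ)-((r:ℤ)+1)))
      = ∑ r ∈ Finset.range (s + 1),
        C n ((r:ℤ)-1) * (C ((l:ℤ)+s-r) ((s:ℤ)-r) * C ((l:ℤ)+a-r) ((a:ℤ)-r)) := by
    have hs0 : (fun r : ℕ => C n ((r:ℤ)-1) * (C ((l:ℤ)+s-r) ((s:ℤ)-r) * C ((l:ℤ)+a-r) ((a:ℤ)-r))) 0 = 0 := by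
      dsimp only; push_cast
      rw [C_neg (by norm_num)]; ring
    have hsh := sum_shift s
      (fun r : ℕ => C n ((r:ℤ)-1) * (C ((l:ℤ)+s-r) ((s:ℤ)-r) * C ((l:ℤ)+a-r) ((a:ℤ)-r))) hs0
    have htop : (fun r : ℕ => C n ((r:ℤ)-1) * (C ((l:ℤ)+s-r) ((s:ℤ)-r) * C ((l:ℤ)+a-r) ((a:ℤ)-r))) (s+1) = 0 := by
      dsimp only; push_cast
      rw [C_neg (show (s:ℤ) - ((s:ℤ)+1) < 0 by omega)]; ring
    beta_reduce at htop
    rw [htop, add_zero] at hsh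
    rw [← hsh]
    refine Finset.sum_congr rfl fun r _ => ?_
    push_cast; ring_nf
  rw [h1, Finset.sum_sub_distrib, h2]
  have h3 : ∑ r ∈ Finset.range (s + 1),
        C n r * (C ((l:ℤ)+s-r) ((s:ℤ)-r) * C ((l:ℤ)+a-r) ((a:ℤ)-r))
      - ∑ r ∈ Finset.range (s + 1),
        C n ((r:ℤ)-1) * (C ((l:ℤ)+s-r) ((s:ℤ)-r) * C ((l:ℤ)+a-r) ((a:ℤ)-r))
      = ∑ r ∈ Finset.range (s + 1),
        (C (l+s+a : ℕ) r - C (l+s+a : ℕ) ((r:ℤ)-1)) *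
          (C ((l:ℤ)+s-r) ((s:ℤ)-r) * C ((l:ℤ)+a-r) ((a:ℤ)-r)) := by
    rw [← Finset.sum_sub_distrib]
    refine Finset.sum_congr rfl fun r _ => ?_
    rw [ha]
    ring
  rw [h3, ← KS_ext l s a (s+1) (by omega), key]
  rw [show C (n:ℤ) (l:ℤ) = ((n.choose l : ℕ) : ℤ) from C_cast n l,
      show ((n:ℤ) - l) = ((s+a : ℕ) : ℤ) by push_cast; omega,
      C_cast, ha]
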